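/- Let n ≥ 2 and let F ≠ 0 be a multilinear polynomial in ℂ[X_1,…,X_n]. Then F splits across no nontrivial bipartition (i.e., the corresponding n-qubit state is genuinely entangled) if and only if every variable X_1,…,X_n occurs in F and F is irreducible in ℂ[X_1,…,X_n]. -/

import Mathlib

open MvPolynomial Finset

private lemma mem_vars_iff_degreeOf_ne {n : ℕ} (j : Fin n) (p : MvPolynomial (Fin n) ℂ) :
    j ∈ p.vars ↔ p.degreeOf j ≠ 0 := by
  classical
  rw [vars_def, Multiset.mem_toFinset, degreeOf_def, ← Multiset.count_pos]
  omega

private lemma degOf_mul {n : ℕ} (j : Fin n) (p q : MvPolynomial (Fin n) ℂ)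
    (hp : p ≠ 0) (hq : q ≠ 0) :
    (p * q).degreeOf j = p.degreeOf j + q.degreeOf j := by
  obtain ⟨m, rfl⟩ : ∃ m, n = m + 1 := ⟨n - 1, by have := j.is_lt; omega⟩
  set e : Fin (m + 1) ≃ Fin (m + 1) := Equiv.swap 0 j with he
  have key : ∀ f : MvPolynomial (Fin (m + 1)) ℂ,
      f.degreeOf j = (rename e f).degreeOf 0 := by
    intro f
    have h := degreeOf_rename_of_injective (p := f) e.injective j
    rw [show e j = 0 from Equiv.swap_apply_right 0 j] at h
    exact h.symm
  have hp' : rename (⇑e) p ≠ 0 := fun h =>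
    hp (rename_injective _ e.injective (h.trans (map_zero _).symm))
  have hq' : rename (⇑e) q ≠ 0 := fun h =>
    hq (rename_injective _ e.injective (h.trans (map_zero _).symm))
  rw [key, key, key, map_mul]
  rw [← natDegree_finSuccEquiv, ← natDegree_finSuccEquiv, ← natDegree_finSuccEquiv, map_mul]
  exact Polynomial.natDegree_mul
    ((EmbeddingLike.map_ne_zero_iff (f := finSuccEquiv ℂ m)).2 hp')
    ((EmbeddingLike.map_ne_zero_iff (f := finSuccEquiv ℂ m)).2 hq')

private lemma vars_eq_empty_of_isUnit {n : ℕ} {p : MvPolynomial (Fin n) ℂ} (h : IsUnit p) :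
    p.vars = ∅ := by
  obtain ⟨r, hr⟩ := h.exists_right_inv
  have hp : p ≠ 0 := fun h0 => by simp [h0] at hr
  have hrne : r ≠ 0 := fun h0 => by simp [h0] at hr
  refine Finset.eq_empty_iff_forall_notMem.mpr fun j hj => ?_
  have hd := degOf_mul j p r hp hrne
  rw [hr] at hd
  rw [show (1 : MvPolynomial (Fin n) ℂ) = C 1 from (C_1).symm, degreeOf_C] at hd
  exact (mem_vars_iff_degreeOf_ne j p).1 hj (by omega)

private lemma isUnit_of_vars_empty {n : ℕ} {p : MvPolynomial (Fin n) ℂ} (hp : p ≠ 0)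
    (h : p.vars = ∅) : IsUnit p := by
  have hpc : p = C (p.coeff 0) := by
    ext m
    by_cases hm : m = 0
    · simp [hm]
    · rw [coeff_C, if_neg fun h0 => hm h0.symm]
      by_contra hc
      obtain ⟨j, hj⟩ := Finsupp.support_nonempty_iff.mpr hm
      have : j ∈ p.vars := (mem_vars j).mpr ⟨m, mem_support_iff.mpr hc, hj⟩
      simp [h] at this
  have hc : p.coeff 0 ≠ 0 := fun h0 => hp (by rw [hpc, h0, map_zero])
  rw [hpc]
  exact (isUnit_iff_ne_zero.mpr hc).map C

/-- Theorem 2.1(iii)(a): a nonzero multilinear polynomial `F`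
splits across no nontrivial bipartition iff every variable occurs in `F` and `F`
is irreducible. -/
theorem stmt_2 (n : ℕ) (hn : 2 ≤ n) (F : MvPolynomial (Fin n) ℂ) (hF : F ≠ 0)
    (hml : ∀ j, F.degreeOf j ≤ 1) :
    (∀ E : Finset (Fin n), E.Nonempty → E ≠ Finset.univ →
        ¬ ∃ p q : MvPolynomial (Fin n) ℂ, F = p * q ∧ p.vars ⊆ E ∧ q.vars ⊆ Eᶜ)
      ↔ ((∀ j, j ∈ F.vars) ∧ Irreducible F) := by
  constructor
  · intro hsplit
    have hvars : ∀ j, j ∈ F.vars := by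
      intro j
      by_contra hj
      have hne : ({j} : Finset (Fin n)) ≠ Finset.univ := by
        obtain ⟨k, hk⟩ := Fintype.exists_ne_of_one_lt_card (by rw [Fintype.card_fin]; omega) j
        intro h
        have : k ∈ ({j} : Finset (Fin n)) := h ▸ Finset.mem_univ k
        exact hk (Finset.mem_singleton.mp this)
      refine hsplit {j} ⟨j, Finset.mem_singleton_self j⟩ hne
        ⟨1, F, (one_mul F).symm, by simp, ?_⟩
      intro x hx
      rw [Finset.mem_compl, Finset.mem_singleton]
      rintro rfl
      exact hj hx
    refine ⟨hvars, ?_, ?_⟩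
    · intro hu
      have h0 := vars_eq_empty_of_isUnit hu
      have : (⟨0, by omega⟩ : Fin n) ∈ F.vars := hvars _
      simp [h0] at this
    · intro p q hpq
      by_contra hcon
      push_neg at hcon
      obtain ⟨hpu, hqu⟩ := hcon
      have hp : p ≠ 0 := fun h => hF (by rw [hpq, h, zero_mul])
      have hq : q ≠ 0 := fun h => hF (by rw [hpq, h, mul_zero])
      have hdisj : ∀ j : Fin n, j ∈ p.vars → j ∉ q.vars := by
        intro j hjp hjq
        have h1 : 1 ≤ p.degreeOf j := Nat.one_le_iff_ne_zero.mpr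
          ((mem_vars_iff_degreeOf_ne j p).1 hjp)
        have h2 : 1 ≤ q.degreeOf j := Nat.one_le_iff_ne_zero.mpr
          ((mem_vars_iff_degreeOf_ne j q).1 hjq)
        have h3 := hml j
        rw [hpq, degOf_mul j p q hp hq] at h3
        omega
      have hpne : p.vars.Nonempty := by
        rw [Finset.nonempty_iff_ne_empty]
        intro h
        exact hpu (isUnit_of_vars_empty hp h)
      have hpuniv : p.vars ≠ Finset.univ := by
        intro h
        have hqe : q.vars = ∅ := Finset.eq_empty_iff_forall_notMem.mpr fun j hj =>
          hdisj j (h ▸ Finset.mem_univ j) hj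
        exact hqu (isUnit_of_vars_empty hq hqe)
      exact hsplit p.vars hpne hpuniv
        ⟨p, q, hpq, le_refl _, fun j hj => Finset.mem_compl.mpr fun hjp => hdisj j hjp hj⟩
  · rintro ⟨hvars, hirr⟩ E hE hEu ⟨p, q, hpq, hpE, hqE⟩
    rcases hirr.isUnit_or_isUnit hpq with hu | hu
    · have hpv := vars_eq_empty_of_isUnit hu
      obtain ⟨j, hj⟩ := hE
      have hjc : j ∈ Eᶜ := hqE (by
        have hh := vars_mul p q (hpq ▸ hvars j)
        rw [hpv, Finset.empty_union] at hh
        exact hh)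
      exact (Finset.mem_compl.mp hjc) hj
    · have hqv := vars_eq_empty_of_isUnit hu
      obtain ⟨j, hj⟩ : ∃ j, j ∉ E := by
        by_contra hcc
        push_neg at hcc
        exact hEu (Finset.eq_univ_iff_forall.mpr hcc)
      have hjE : j ∈ E := hpE (by
        have hh := vars_mul p q (hpq ▸ hvars j)
        rw [hqv, Finset.union_empty] at hh
        exact hh)
      exact hj hjE
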